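/- Let δ be a Young diagram of height < r and width strictly less than d − r + 1 (with 0 < r ≤ d), and set ε_k = c_{d−r+1, r}(δ_k) for the staircase sequence δ_0, …, δ_K with K = d − r + 1. Then the height of ε_k equals r for all k < K, the height of ε_K is strictly less than r, and ε_K = c_{d−r, r−1}(δ). -/
import Mathlib


/-- Row lengths (0-indexed) of the rotated complement of a Young diagram inside a
`w × h` rectangle. -/
def ydComp (w h : ℕ) (f : ℕ → ℕ) : ℕ → ℕ :=
  fun i => if i < h then w - f (h - 1 - i) else 0

/-- `colHt f j` : height of the `j`-th column (`j ≥ 1`) of the Young diagram with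
0-indexed row lengths `f`, i.e. the number of rows of length at least `j`. -/
noncomputable def colHt (f : ℕ → ℕ) (j : ℕ) : ℕ := sInf {i | f i < j}

/-- Add boxes to column `k` so that rows `0,…,t-1` reach length at least `k`,
i.e. the `k`-th column reaches height `t`. -/
def addCol (f : ℕ → ℕ) (k t : ℕ) : ℕ → ℕ :=
  fun i => if i < t then max (f i) k else f i

/-- The staircase algorithm with parameter `r` applied to a Young diagram `f` of
height `< r`: stage 1 adds boxes to the first column until it reaches height `r`;
stage `k ≥ 2` adds boxes to the `k`-th column until its height is one more than the
height of the `(k-1)`-th column of the starting diagram. `staircase r f k` is `δ_k`. -/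
noncomputable def staircase (r : ℕ) (f : ℕ → ℕ) : ℕ → ℕ → ℕ
  | 0 => f
  | k + 1 => addCol (staircase r f k) (k + 1) (if k = 0 then r else colHt f k + 1)

lemma colHt_lt_iff (r : ℕ) (f : ℕ → ℕ) (hr : 0 < r)
    (hmono : ∀ i j, i ≤ j → f j ≤ f i) (hht : f (r - 1) = 0)
    (k : ℕ) (hk : 1 ≤ k) (i : ℕ) : i < colHt f k ↔ k ≤ f i := by
  have hne : (r - 1) ∈ {i | f i < k} := by simp only [Set.mem_setOf_eq, hht]; omega
  constructor
  · intro h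
    have := Nat.notMem_of_lt_sInf h
    simp only [Set.mem_setOf_eq] at this
    omega
  · intro h
    by_contra hc
    push_neg at hc
    have hmem : f (colHt f k) < k := Nat.sInf_mem ⟨_, hne⟩
    have := hmono _ _ hc
    omega

lemma colHt_lt_r (r : ℕ) (f : ℕ → ℕ) (hr : 0 < r) (hht : f (r - 1) = 0)
    (k : ℕ) (hk : 1 ≤ k) : colHt f k < r := by
  have : colHt f k ≤ r - 1 :=
    Nat.sInf_le (by simp only [Set.mem_setOf_eq, hht]; omega)
  omega

lemma stair_cf (r : ℕ) (f : ℕ → ℕ) (hr : 0 < r)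
    (hmono : ∀ i j, i ≤ j → f j ≤ f i) (hht : ∀ i, r - 1 ≤ i → f i = 0) :
    ∀ k, 1 ≤ k → ∀ i, staircase r f k i =
      if i < r then
        (if i = 0 then max (f 0) k else max (f i) (min (f (i - 1) + 1) k))
      else f i := by
  have hh : f (r - 1) = 0 := hht _ le_rfl
  intro k
  induction k with
  | zero => omega
  | succ k ih =>
    intro _ i
    by_cases hk0 : k = 0
    · subst hk0
      have hone : staircase r f 1 i = if i < r then max (f i) 1 else f i := by
        show addCol (staircase r f 0) 1 (if (0:ℕ) = 0 then r else colHt f 0 + 1) i = _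
        simp [addCol, staircase]
      rw [hone]
      by_cases hi : i < r
      · rw [if_pos hi, if_pos hi]
        by_cases hi0 : i = 0
        · rw [if_pos hi0, hi0]
        · rw [if_neg hi0]; omega
      · rw [if_neg hi, if_neg hi]
    · have hk1 : 1 ≤ k := by omega
      have hiff := colHt_lt_iff r f hr hmono hh k hk1
      have hltr := colHt_lt_r r f hr hh k hk1
      have hstep : staircase r f (k + 1) i =
          if i < colHt f k + 1 then max (staircase r f k i) (k + 1)
          else staircase r f k i := by
        show addCol (staircase r f k) (k + 1) (if k = 0 then r else colHt f k + 1) i = _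
        rw [if_neg hk0]; rfl
      by_cases hi : i < r
      · have hprev : staircase r f k i =
            if i = 0 then max (f 0) k else max (f i) (min (f (i - 1) + 1) k) := by
          rw [ih hk1 i, if_pos hi]
        rw [hstep, hprev, if_pos hi]
        by_cases hi0 : i = 0
        · subst hi0
          rw [if_pos (by omega : 0 < colHt f k + 1), if_pos rfl, if_pos rfl]
          omega
        · rw [if_neg hi0, if_neg hi0]
          have h2 := hiff (i - 1)
          by_cases hc : k ≤ f (i - 1)
          · rw [if_pos (by omega : i < colHt f k + 1)]
            omega
          · rw [if_neg (by omega : ¬ i < colHt f k + 1)]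
            omega
      · have hprev : staircase r f k i = f i := by rw [ih hk1 i, if_neg hi]
        rw [hstep, if_neg (by omega : ¬ i < colHt f k + 1), hprev, if_neg hi]

/-- For `δ` of height `< r` and width `< d - r + 1`, with `ε_k = c_{d-r+1,r}(δ_k)`
and `K = d - r + 1`: the height of `ε_k` equals `r` for `k < K`, the height of
`ε_K` is `< r`, and `ε_K = c_{d-r,r-1}(δ)`. -/
theorem stmt9 (d r : ℕ) (f : ℕ → ℕ) (hr : 0 < r) (hrd : r ≤ d)
    (hmono : ∀ i j, i ≤ j → f j ≤ f i)
    (hht : ∀ i, r - 1 ≤ i → f i = 0)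
    (hwidth : f 0 < d - r + 1) :
    (∀ k, k < d - r + 1 →
        sInf {i | ydComp (d - r + 1) r (staircase r f k) i = 0} = r) ∧
      sInf {i | ydComp (d - r + 1) r (staircase r f (d - r + 1)) i = 0} < r ∧
      ydComp (d - r + 1) r (staircase r f (d - r + 1)) = ydComp (d - r) (r - 1) f := by
  set w := d - r + 1 with hw
  have hw1 : 1 ≤ w := by omega
  have hcf := stair_cf r f hr hmono hht
  have hsmall : ∀ k, k < w → ∀ j, j < r → staircase r f k j < w := by
    intro k hk j hj
    have hfj : f j ≤ f 0 := hmono 0 j (Nat.zero_le _)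
    rcases Nat.eq_zero_or_pos k with hk0 | hk1
    · subst hk0
      show f j < w
      omega
    · rw [hcf k hk1 j, if_pos hj]
      by_cases hj0 : j = 0
      · rw [if_pos hj0]; omega
      · rw [if_neg hj0]; omega
  have h0 : staircase r f w 0 = w := by
    rw [hcf w hw1 0, if_pos hr, if_pos rfl]; omega
  refine ⟨?_, ?_, ?_⟩
  · intro k hk
    have hrmem : ydComp w r (staircase r f k) r = 0 := by
      simp [ydComp]
    refine le_antisymm (Nat.sInf_le hrmem) (le_csInf ⟨r, hrmem⟩ ?_)
    intro b hb
    by_contra hc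
    push_neg at hc
    have hb' : ydComp w r (staircase r f k) b = 0 := hb
    rw [ydComp] at hb'
    simp only [if_pos hc] at hb'
    have := hsmall k hk (r - 1 - b) (by omega)
    omega
  · have hmem : ydComp w r (staircase r f w) (r - 1) = 0 := by
      rw [ydComp]
      simp only [if_pos (show r - 1 < r by omega)]
      rw [Nat.sub_self, h0]
      omega
    have hle : sInf {i | ydComp w r (staircase r f w) i = 0} ≤ r - 1 :=
      Nat.sInf_le hmem
    omega
  · funext i
    rw [ydComp, ydComp]
    by_cases h1 : i < r - 1
    · rw [if_pos (by omega : i < r), if_pos h1]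
      have hj1 : 1 ≤ r - 1 - i := by omega
      rw [hcf w hw1 (r - 1 - i), if_pos (by omega : r - 1 - i < r),
        if_neg (by omega : ¬ r - 1 - i = 0)]
      have he : r - 1 - i - 1 = r - 1 - 1 - i := by omega
      rw [he]
      have hm1 : f (r - 1 - i) ≤ f (r - 1 - 1 - i) := hmono _ _ (by omega)
      have hm2 : f (r - 1 - 1 - i) ≤ f 0 := hmono 0 _ (Nat.zero_le _)
      omega
    · by_cases h2 : i < r
      · have hi : i = r - 1 := by omega
        rw [if_pos h2, if_neg h1, hi, Nat.sub_self, h0]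
        omega
      · rw [if_neg h2, if_neg (by omega : ¬ i < r - 1)]
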